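/- arXiv:hep-th/9506017 — 2 statements merged into one kernel-verified Lean document; each statement's English description precedes it below -/
import Mathlib

section
/- For an involutive symbol with class indices β_k, the rank of the r-th prolonged symbol equals Σ_{k=1}^{n} binomial(r+k-1, r) β_k. -/
lemma prolong_formula (n : ℕ) (β : ℕ → ℕ) (b : ℕ → ℕ → ℕ)
    (h0 : ∀ i, b 0 i = β i)
    (hrec : ∀ r i, b (r + 1) i = ∑ k ∈ Finset.Icc i n, b r k) :
    ∀ r i, b (r + 1) i = ∑ k ∈ Finset.Icc i n, Nat.choose (r + (k - i)) r * β k := by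
  intro r
  induction r with
  | zero =>
    intro i
    rw [hrec]
    refine Finset.sum_congr rfl fun k hk => ?_
    simp [h0]
  | succ r ih =>
    intro i
    rw [hrec]
    have step : ∑ j ∈ Finset.Icc i n, b (r + 1) j
        = ∑ j ∈ Finset.Icc i n, ∑ k ∈ Finset.Icc j n, Nat.choose (r + (k - j)) r * β k :=
      Finset.sum_congr rfl fun j _ => ih j
    rw [step]
    rw [Finset.sum_comm' (t' := Finset.Icc i n) (s' := fun k => Finset.Icc i k)
      (by intro j k
          simp only [Finset.mem_Icc]
          omega)]
    refine Finset.sum_congr rfl fun k hk => ?_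
    rw [← Finset.sum_mul]
    congr 1
    simp only [Finset.mem_Icc] at hk
    -- ∑ j ∈ Icc i k, C (r + (k - j)) r = C (r + 1 + (k - i)) (r + 1)
    have reindex : ∑ j ∈ Finset.Icc i k, Nat.choose (r + (k - j)) r
        = ∑ m ∈ Finset.Icc r (r + (k - i)), Nat.choose m r := by
      apply Finset.sum_nbij' (i := fun j => r + (k - j)) (j := fun m => k - (m - r))
      · intro j hj; simp only [Finset.mem_Icc] at *; omega
      · intro m hm; simp only [Finset.mem_Icc] at *; omega
      · intro j hj; simp only [Finset.mem_Icc] at hj; omega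
      · intro m hm; simp only [Finset.mem_Icc] at hm; omega
      · intro j hj; rfl
    rw [reindex, Nat.sum_Icc_choose]
    congr 1
    omega

/-- The rank of the r-th prolonged symbol of an involutive symbol with class
indices β equals `∑_{k=1}^n C(r+k-1, r) β k`. -/
theorem rank_prolonged_symbol (n : ℕ) (β : ℕ → ℕ) (b : ℕ → ℕ → ℕ)
    (h0 : ∀ i, b 0 i = β i)
    (hrec : ∀ r i, b (r + 1) i = ∑ k ∈ Finset.Icc i n, b r k) :
    ∀ r, (∑ k ∈ Finset.Icc 1 n, b r k) =
      ∑ k ∈ Finset.Icc 1 n, Nat.choose (r + k - 1) r * β k := by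
  intro r
  have h := prolong_formula n β b h0 hrec r 1
  rw [hrec] at h
  rw [h]
  refine Finset.sum_congr rfl fun k hk => ?_
  simp only [Finset.mem_Icc] at hk
  congr 2
  omega
end

section
/- For an involutive system, the dimension of the r-th prolonged symbol equals Σ_{k=1}^{n} binomial(r+k-1, r) α^{(q)}_k, where α^{(q)}_k are the Cartan characters; i.e., dim M_{q+r} = Σ_k α^{(q+r)}_k = Σ_k C(r+k-1, r) α^{(q)}_k. -/
open Finset

/-- Hockey stick. -/
lemma hs_aux (r N : ℕ) : ∑ j ∈ range (N+1), (r+j).choose r = (r+N+1).choose N := by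
  induction N with
  | zero => simp
  | succ N ih =>
    rw [Finset.sum_range_succ, ih,
      show r + (N+1) = r + N + 1 by ring,
      show r + N + 1 + 1 = (r+N+1) + 1 from rfl,
      Nat.choose_succ_succ (r+N+1) N,
      show (r+N+1).choose (N+1) = (r+N+1).choose r by
        rw [show r+N+1 = (N+1) + r by ring, Nat.choose_symm_add]]

/-- Vandermonde-type convolution. -/
lemma vand_aux (r s N : ℕ) :
    ∑ j ∈ range (N+1), (r+j).choose r * (s + (N-j)).choose s = (r+s+N+1).choose N := by
  induction s generalizing N with
  | zero =>
    have h : ∀ j ∈ range (N+1), (r+j).choose r * (0 + (N-j)).choose 0 = (r+j).choose r := by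
      intro j hj; simp
    rw [Finset.sum_congr rfl h, hs_aux, show r+0+N+1 = r+N+1 by ring]
  | succ s ih =>
    induction N with
    | zero => simp
    | succ N ihN =>
      have hsplit : ∀ j ∈ range (N+1),
          (r+j).choose r * (s+1 + (N+1-j)).choose (s+1)
          = (r+j).choose r * (s + (N+1-j)).choose s
            + (r+j).choose r * (s+1 + (N-j)).choose (s+1) := by
        intro j hj
        simp only [Finset.mem_range] at hj
        have h1 : s+1 + (N+1-j) = (s + (N+1-j)) + 1 := by omega
        have h2 : s + (N+1-j) = s+1+(N-j) := by omega
        rw [h1, Nat.choose_succ_succ, h2, Nat.mul_add]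
      have key : ∑ j ∈ range (N+1+1), (r+j).choose r * (s+1 + (N+1-j)).choose (s+1)
          = (∑ j ∈ range (N+1+1), (r+j).choose r * (s + (N+1-j)).choose s)
            + ∑ j ∈ range (N+1), (r+j).choose r * (s+1 + (N-j)).choose (s+1) := by
        rw [Finset.sum_range_succ, Finset.sum_range_succ
          (fun j => (r+j).choose r * (s + (N+1-j)).choose s)]
        rw [Finset.sum_congr rfl hsplit, Finset.sum_add_distrib]
        simp only [Nat.sub_self, Nat.add_zero, Nat.choose_self, Nat.mul_one]
        ring
      rw [key, ih (N+1), ihN,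
        show r+s+(N+1)+1 = r+s+N+2 by ring,
        show r+(s+1)+N+1 = r+s+N+2 by ring,
        show r+(s+1)+(N+1)+1 = (r+s+N+2)+1 by ring,
        Nat.choose_succ_succ (r+s+N+2) N]
      simp only [Nat.succ_eq_add_one]
      omega

lemma key_nat (n q r : ℕ) (hn : 1 ≤ n) (hq : 1 ≤ q) :
    (q + r + n - 1).choose (q + r)
      = ∑ k ∈ Finset.Icc 1 n, (r + k - 1).choose r * (q + n - k - 1).choose (q - 1) := by
  obtain ⟨N, rfl⟩ := Nat.exists_eq_add_of_le hn  -- n = 1 + N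
  obtain ⟨s, rfl⟩ := Nat.exists_eq_add_of_le hq  -- q = 1 + s
  rw [← Finset.Ico_add_one_right_eq_Icc, Finset.sum_Ico_eq_sum_range]
  have h : ∀ j ∈ range (1 + N + 1 - 1),
      (r + (1+j) - 1).choose r * (1 + s + (1+N) - (1+j) - 1).choose (1 + s - 1)
      = (r+j).choose r * (s + (N-j)).choose s := by
    intro j hj
    simp only [Finset.mem_range] at hj
    congr 2 <;> omega
  rw [Finset.sum_congr rfl h, show 1 + N + 1 - 1 = N + 1 by omega, vand_aux,
    show r+s+N+1 = (r+s+1)+N by ring, ← Nat.choose_symm_add,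
    show (r+s+1)+N = 1+s+r+(1+N)-1 by omega]
  congr 1
  omega

/-- The dimension of the r-th prolonged symbol (the Hilbert polynomial)
equals `∑_{k=1}^n C(r+k-1, r) α^{(q)}_k`:
`m·C(q+r+n-1, q+r) − ∑_k C(r+k-1,r) β_k = ∑_k C(r+k-1,r) α_k`. -/
theorem hilbert_polynomial (n m q r : ℕ) (hn : 1 ≤ n) (hq : 1 ≤ q)
    (β : ℕ → ℕ) (α : ℕ → ℤ)
    (hβ : ∀ k, k ∈ Finset.Icc 1 n → β k ≤ m * Nat.choose (q + n - k - 1) (q - 1))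
    (hα : ∀ k, α k = (m * Nat.choose (q + n - k - 1) (q - 1) : ℤ) - β k) :
    (m * Nat.choose (q + r + n - 1) (q + r) : ℤ)
      - ∑ k ∈ Finset.Icc 1 n, (Nat.choose (r + k - 1) r : ℤ) * β k
    = ∑ k ∈ Finset.Icc 1 n, (Nat.choose (r + k - 1) r : ℤ) * α k := by
  have hN : m * (q+r+n-1).choose (q+r)
      = ∑ k ∈ Finset.Icc 1 n, (r+k-1).choose r * (m * (q+n-k-1).choose (q-1)) := by
    rw [key_nat n q r hn hq, Finset.mul_sum]
    exact Finset.sum_congr rfl (fun k _ => by ring)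
  simp only [hα, mul_sub, Finset.sum_sub_distrib]
  congr 1
  exact_mod_cast hN
end
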